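/- Let E ⊆ U be ordered fields, O a convex valuation subring of U, and x ∈ U \ E. If val(x−E) has no maximum, then both val({x−c : c ∈ E, x−c > 0}) and val({x−c : c ∈ E, x−c < 0}) are cofinal in val(x−E). -/

import Mathlib

lemma abs_lt_of_val_lt {U : Type*} [Field U] [LinearOrder U] [IsStrictOrderedRing U] (O : ValuationSubring U)
    (hconv : ∀ a b : U, a ∈ O → |b| ≤ |a| → b ∈ O) {a b : U}
    (h : O.valuation a < O.valuation b) : |a| < |b| := by
  have hb : b ≠ 0 := by
    rintro rfl
    simp only [map_zero] at h
    exact absurd h (by simp)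
  by_contra hle
  push_neg at hle
  have ha : a ≠ 0 := by
    rintro rfl
    simp only [abs_zero] at hle
    exact hb (abs_eq_zero.mp (le_antisymm hle (abs_nonneg b)))
  have hmem : b / a ∈ O := by
    apply hconv 1 _ O.one_mem
    rw [abs_one, abs_div, div_le_one (by positivity)]
    exact hle
  have h1 : O.valuation (b / a) ≤ 1 := (O.valuation_le_one_iff _).mpr hmem
  have : O.valuation b ≤ O.valuation a := by
    have := mul_le_mul_left h1 (O.valuation a)
    rwa [← Valuation.map_mul, div_mul_cancel₀ _ ha, one_mul] at this
  exact absurd h (not_lt.mpr this)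

/-- Let `E ⊆ U` be ordered fields, `O` an order-convex valuation
subring of `U`, and `x ∈ U \ E`.  If `val (x - E)` has no maximum, then the values of
the positive differences `x - d > 0` and of the negative differences `x - d < 0` are
both cofinal in `val (x - E)`.  (Multiplicative convention: paper's `val(a) ≥ val(b)`
is `O.valuation a ≤ O.valuation b`, so cofinality of `S` in `val (x - E)` reads: for
every `c ∈ E` there is `d ∈ S` with `O.valuation (x - d) ≤ O.valuation (x - c)`.) -/
theorem stmt3 {U : Type*} [Field U] [LinearOrder U] [IsStrictOrderedRing U] (E : Subfield U)
    (O : ValuationSubring U) (hconv : ∀ a b : U, a ∈ O → |b| ≤ |a| → b ∈ O)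
    (x : U) (hx : x ∉ E)
    (hnomax : ¬ ∃ c ∈ E, ∀ d ∈ E, O.valuation (x - c) ≤ O.valuation (x - d)) :
    (∀ c ∈ E, ∃ d ∈ E, 0 < x - d ∧ O.valuation (x - d) ≤ O.valuation (x - c)) ∧
    (∀ c ∈ E, ∃ d ∈ E, x - d < 0 ∧ O.valuation (x - d) ≤ O.valuation (x - c)) := by
  push_neg at hnomax
  -- main construction
  have key : ∀ c ∈ E, ∀ s : U, s = 1 ∨ s = -1 →
      ∃ d ∈ E, 0 < s * (x - d) ∧ O.valuation (x - d) ≤ O.valuation (x - c) := by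
    intro c hc s hs
    obtain ⟨d, hd, hlt⟩ := hnomax c hc
    set t : U := c - d with ht
    have htval : O.valuation t = O.valuation (x - c) := by
      have : t = (x - d) - (x - c) := by ring
      rw [this, Valuation.map_sub_eq_of_lt_right _ hlt]
    have habs : |x - d| < |t| := by
      apply abs_lt_of_val_lt O hconv
      rw [htval]; exact hlt
    -- take e = d - s * |t|
    have habsmem : |t| ∈ E := by
      rcases abs_choice t with h | h <;> rw [h]
      · exact E.sub_mem hc hd
      · exact E.neg_mem (E.sub_mem hc hd)
    refine ⟨d - s * |t|, by
      rcases hs with rfl | rfl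
      · simpa using E.sub_mem hd habsmem
      · simpa using E.add_mem hd habsmem, ?_, ?_⟩
    · have heq : s * (x - (d - s * |t|)) = s * (x - d) + |t| := by
        rcases hs with rfl | rfl <;> ring
      rw [heq]
      obtain ⟨h1, h2⟩ := abs_lt.mp habs
      rcases hs with rfl | rfl <;> nlinarith
    · have heq : x - (d - s * |t|) = (x - d) + s * |t| := by ring
      have hst : O.valuation (s * |t|) = O.valuation t := by
        rcases abs_choice t with h | h <;> rcases hs with rfl | rfl <;>
          simp [h, Valuation.map_neg]
      have hvs : O.valuation (x - d) < O.valuation (s * |t|) := by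
        rw [hst, htval]; exact hlt
      rw [heq, Valuation.map_add_eq_of_lt_right _ hvs, hst, htval]
  constructor
  · intro c hc
    obtain ⟨d, hd, h1, h2⟩ := key c hc 1 (Or.inl rfl)
    exact ⟨d, hd, by linarith [h1], h2⟩
  · intro c hc
    obtain ⟨d, hd, h1, h2⟩ := key c hc (-1) (Or.inr rfl)
    exact ⟨d, hd, by nlinarith [h1], h2⟩
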